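/- Let (v_n)_{n≥0} be a Cauchy sequence in Γ₀ for the tree metric ρ. Then exactly one of the following holds: either (v_n) is eventually equal to some constant finite word v (and hence converges to v), or there is a unique infinite word z over {a,b} such that ρ(v_n, z|_n) → 0 as n → ∞. -/

import Mathlib

/-- The prefix of length `n` of the infinite word `z : ℕ → Bool`
(letters `a`/`b` are modeled as the two elements of `Bool`). -/
def prefixWord (z : ℕ → Bool) (n : ℕ) : List Bool := (List.range n).map z

/-- `z` is periodic with period `p ≥ 1`: `z (i + p) = z i` for all `i`. -/
def IsPeriodicWith (z : ℕ → Bool) (p : ℕ) : Prop := 1 ≤ p ∧ ∀ i, z (i + p) = z i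

/-- `z` is a periodic infinite word. -/
def IsPeriodicWord (z : ℕ → Bool) : Prop := ∃ p, IsPeriodicWith z p

/-- The minimal period of `z` (junk value `0` if `z` is not periodic). -/
noncomputable def minPeriod (z : ℕ → Bool) : ℕ := sInf {p | IsPeriodicWith z p}

/-- The finite word `v` occurs in `z` as a contiguous segment starting at position `n`. -/
def OccursAt (v : List Bool) (z : ℕ → Bool) (n : ℕ) : Prop :=
  ∀ i < v.length, z (n + i) = v.getD i false

/-- The finite word `v` occurs somewhere in `z` as a contiguous segment. -/
def Occurs (v : List Bool) (z : ℕ → Bool) : Prop := ∃ n, OccursAt v z n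

/-- The minimal potential period `p₀ v` of a finite word `v`: the minimum, over all
periodic infinite words `z` in which `v` occurs, of the minimal period of `z`;
`p₀` of the empty word is `0`. -/
noncomputable def p0 (v : List Bool) : ℕ :=
  if v = [] then 0
  else sInf {p | ∃ z : ℕ → Bool, IsPeriodicWord z ∧ Occurs v z ∧ minPeriod z = p}

/-- The `d`-length of a finite word: the sum of the lengths `d (w|_i)` of the tree
edges along the path from the empty word to `w` (the edge joining a nonempty word `u`
to the word obtained by deleting its last letter has length `d u`). -/
noncomputable def dLength (d : List Bool → ℝ) (w : List Bool) : ℝ :=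
  ∑ i ∈ Finset.range w.length, d (w.take (i + 1))

/-- The longest common prefix of two finite words. -/
def lcp : List Bool → List Bool → List Bool
  | a :: u, b :: v => if a = b then a :: lcp u v else []
  | _, _ => []

/-- The tree metric on finite words induced by the edge lengths `d`:
`ρ(u,v) = l_d(u) + l_d(v) − 2 l_d(u ∧ v)`. -/
noncomputable def treeDist (d : List Bool → ℝ) (u v : List Bool) : ℝ :=
  dLength d u + dLength d v - 2 * dLength d (lcp u v)

/-- The specific edge lengths `d(u) = 2 ^ (−p₀ u)` used in the counterexample. -/
noncomputable def dEdge (u : List Bool) : ℝ := 2 ^ (-(p0 u : ℤ))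

/-- Prepending a finite word `w` to an infinite word `z`. -/
def prependWord (w : List Bool) (z : ℕ → Bool) : ℕ → Bool :=
  fun i => if i < w.length then w.getD i false else z (i - w.length)


namespace CauchyAux

lemma prefixWord_length (z : ℕ → Bool) (n : ℕ) : (prefixWord z n).length = n := by
  simp [prefixWord]

lemma prefixWord_take (z : ℕ → Bool) {m n : ℕ} (h : m ≤ n) :
    (prefixWord z n).take m = prefixWord z m := by
  simp [prefixWord, ← List.map_take, List.take_range, min_eq_left h]

lemma prefixWord_getElem (z : ℕ → Bool) {n i : ℕ} (h : i < (prefixWord z n).length) :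
    (prefixWord z n)[i] = z i := by
  simp [prefixWord]

lemma prefixWord_ne_nil (z : ℕ → Bool) {n : ℕ} (h : 0 < n) : prefixWord z n ≠ [] := by
  intro hc
  have := prefixWord_length z n
  rw [hc] at this
  simp at this
  omega

lemma lcp_prefix_left : ∀ u v : List Bool, lcp u v <+: u
  | [], _ => by simp [lcp]
  | _ :: _, [] => by simp [lcp]
  | a :: u, b :: v => by
    by_cases h : a = b
    · simpa [lcp, h, List.cons_prefix_cons] using lcp_prefix_left u v
    · simp [lcp, h]

lemma lcp_prefix_right : ∀ u v : List Bool, lcp u v <+: v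
  | [], _ => by simp [lcp]
  | _ :: _, [] => by simp [lcp]
  | a :: u, b :: v => by
    by_cases h : a = b
    · simpa [lcp, h, List.cons_prefix_cons] using lcp_prefix_right u v
    · simp [lcp, h]

lemma prefix_lcp : ∀ p u v : List Bool, p <+: u → p <+: v → p <+: lcp u v
  | [], _, _, _, _ => List.nil_prefix
  | c :: p, a :: u, b :: v, hu, hv => by
    rw [List.cons_prefix_cons] at hu hv
    have hab : a = b := hu.1.symm.trans hv.1
    simp only [lcp, hab, if_true]
    rw [List.cons_prefix_cons]
    exact ⟨hu.1.trans hab, prefix_lcp p u v hu.2 hv.2⟩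
  | c :: p, a :: u, [], hu, hv => by simp at hv
  | c :: p, [], _, hu, hv => by simp at hu

/-- tail of the d-length beyond depth m -/
noncomputable def dTail (d : List Bool → ℝ) (w : List Bool) (m : ℕ) : ℝ :=
  ∑ i ∈ Finset.Ico m w.length, d (w.take (i + 1))

lemma dTail_term_pos (d : List Bool → ℝ) (hd : ∀ w : List Bool, w ≠ [] → 0 < d w)
    (w : List Bool) {i : ℕ} (hi : i < w.length) : 0 < d (w.take (i + 1)) := by
  apply hd
  rw [Ne, List.take_eq_nil_iff]
  rintro (h | h)
  · omega
  · rw [h] at hi; simp at hi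

lemma dTail_nonneg (d : List Bool → ℝ) (hd : ∀ w : List Bool, w ≠ [] → 0 < d w)
    (w : List Bool) (m : ℕ) : 0 ≤ dTail d w m := by
  apply Finset.sum_nonneg
  intro i hi
  exact (dTail_term_pos d hd w (Finset.mem_Ico.mp hi).2).le

lemma dTail_anti (d : List Bool → ℝ) (hd : ∀ w : List Bool, w ≠ [] → 0 < d w)
    (w : List Bool) {m m' : ℕ} (h : m ≤ m') : dTail d w m' ≤ dTail d w m := by
  apply Finset.sum_le_sum_of_subset_of_nonneg
  · apply Finset.Ico_subset_Ico h le_rfl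
  · intro i hi _
    exact (dTail_term_pos d hd w (Finset.mem_Ico.mp hi).2).le

lemma dTail_single (d : List Bool → ℝ) (hd : ∀ w : List Bool, w ≠ [] → 0 < d w)
    (w : List Bool) {m : ℕ} (h : m < w.length) : d (w.take (m + 1)) ≤ dTail d w m := by
  apply Finset.single_le_sum (f := fun i => d (w.take (i + 1)))
  · intro i hi
    exact (dTail_term_pos d hd w (Finset.mem_Ico.mp hi).2).le
  · exact Finset.mem_Ico.mpr ⟨le_rfl, h⟩

lemma dTail_of_ge (d : List Bool → ℝ) (w : List Bool) {m : ℕ} (h : w.length ≤ m) :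
    dTail d w m = 0 := by
  rw [dTail, Finset.Ico_eq_empty (by omega), Finset.sum_empty]

lemma dLength_split (d : List Bool → ℝ) (w : List Bool) {m : ℕ} (h : m ≤ w.length) :
    dLength d w = dLength d (w.take m) + dTail d w m := by
  have h1 : dLength d (w.take m) = ∑ i ∈ Finset.range m, d (w.take (i + 1)) := by
    rw [dLength, List.length_take, min_eq_left h]
    apply Finset.sum_congr rfl
    intro i hi
    have hi' := Finset.mem_range.mp hi
    rw [List.take_take, min_eq_left (by omega : i + 1 ≤ m)]
  rw [h1, dTail, dLength, Finset.range_eq_Ico]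
  rw [Finset.range_eq_Ico]; exact (Finset.sum_Ico_consecutive (fun i => d (w.take (i + 1))) (Nat.zero_le m) h).symm

lemma treeDist_eq (d : List Bool → ℝ) (u w : List Bool) :
    treeDist d u w = dTail d u (lcp u w).length + dTail d w (lcp u w).length := by
  have hu := lcp_prefix_left u w
  have hw := lcp_prefix_right u w
  have h1 : lcp u w = u.take (lcp u w).length := List.prefix_iff_eq_take.mp hu
  have h2 : lcp u w = w.take (lcp u w).length := List.prefix_iff_eq_take.mp hw
  have e1 := dLength_split d u hu.length_le
  have e2 := dLength_split d w hw.length_le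
  rw [← h1] at e1
  rw [← h2] at e2
  rw [treeDist, e1, e2]
  ring

lemma treeDist_nonneg (d : List Bool → ℝ) (hd : ∀ w : List Bool, w ≠ [] → 0 < d w)
    (u w : List Bool) : 0 ≤ treeDist d u w := by
  rw [treeDist_eq]
  have := dTail_nonneg d hd u (lcp u w).length
  have := dTail_nonneg d hd w (lcp u w).length
  linarith

/-- if takes at level t agree then t ≤ lcp length -/
lemma le_lcp_length {u w : List Bool} {t : ℕ} (h : u.take t = w.take t)
    (hu : t ≤ u.length) : t ≤ (lcp u w).length := by
  have hp : u.take t <+: lcp u w := prefix_lcp _ _ _ (List.take_prefix t u)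
    (h ▸ List.take_prefix t w)
  have := hp.length_le
  rwa [List.length_take, min_eq_left hu] at this

/-- takes at level ≤ lcp length agree -/
lemma take_eq_of_le_lcp {u w : List Bool} {t : ℕ} (h : t ≤ (lcp u w).length) :
    u.take t = w.take t := by
  have h1 : lcp u w = u.take (lcp u w).length := List.prefix_iff_eq_take.mp (lcp_prefix_left u w)
  have h2 : lcp u w = w.take (lcp u w).length := List.prefix_iff_eq_take.mp (lcp_prefix_right u w)
  have : (lcp u w).take t = (lcp u w).take t := rfl
  calc u.take t = (u.take (lcp u w).length).take t := by
        rw [List.take_take, min_eq_left h]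
      _ = (w.take (lcp u w).length).take t := by rw [← h1, ← h2]
      _ = w.take t := by rw [List.take_take, min_eq_left h]

lemma lcp_length_le_left (u w : List Bool) : (lcp u w).length ≤ u.length :=
  (lcp_prefix_left u w).length_le

lemma lcp_length_le_right (u w : List Bool) : (lcp u w).length ≤ w.length :=
  (lcp_prefix_right u w).length_le

end CauchyAux


lemma CauchyAux.prefixWord_getD (z : ℕ → Bool) {m i : ℕ} (h : i < m) :
    (prefixWord z m).getD i false = z i := by
  have hl : i < (prefixWord z m).length := by rw [CauchyAux.prefixWord_length]; exact h
  rw [List.getD_eq_getElem _ _ hl, CauchyAux.prefixWord_getElem]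

lemma CauchyAux.exists_delta (d : List Bool → ℝ) (hd : ∀ w : List Bool, w ≠ [] → 0 < d w)
    (m : ℕ) : ∃ δ : ℝ, 0 < δ ∧ ∀ u : List Bool, u ≠ [] → u.length ≤ m → δ ≤ d u := by
  classical
  have hfin : {l : List Bool | l.length ≤ m}.Finite := List.finite_length_le Bool m
  have hmem : ∀ u : List Bool, u ∈ hfin.toFinset ↔ u.length ≤ m := by
    intro u; rw [Set.Finite.mem_toFinset]; exact Iff.rfl
  have hne : hfin.toFinset.Nonempty := ⟨[], (hmem []).mpr (by simp)⟩
  refine ⟨hfin.toFinset.inf' hne (fun u => if u = [] then 1 else d u), ?_, ?_⟩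
  · rw [Finset.lt_inf'_iff]
    intro u hu
    by_cases h : u = []
    · simp [h]
    · simp only [h, if_false]; exact hd u h
  · intro u hu hlen
    have := Finset.inf'_le (fun u => if u = [] then 1 else d u) ((hmem u).mpr hlen)
    exact le_trans this (by simp [hu])


open CauchyAux

/-- Dichotomy for Cauchy sequences of finite words under the tree metric: a sequence
`(v_n)` that is Cauchy for the tree metric `ρ` (with positive edge lengths `d`) either
is eventually equal to some constant finite word, or there is a unique infinite word
`z` with `ρ(v_n, z|_n) → 0`; and exactly one of the two alternatives holds. -/
theorem cauchy_dichotomy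
    (d : List Bool → ℝ) (hd : ∀ w : List Bool, w ≠ [] → 0 < d w)
    (v : ℕ → List Bool)
    (hv : ∀ ε : ℝ, 0 < ε → ∃ N : ℕ, ∀ m ≥ N, ∀ n ≥ N,
      treeDist d (v m) (v n) < ε) :
    Xor'
      (∃ w : List Bool, ∀ᶠ n in Filter.atTop, v n = w)
      (∃! z : ℕ → Bool,
        Filter.Tendsto (fun n => treeDist d (v n) (prefixWord z n))
          Filter.atTop (nhds 0)) := by
  classical
  by_cases hP : ∃ w : List Bool, ∀ᶠ n in Filter.atTop, v n = w
  · -- left alternative holds; show the right one fails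
    refine Or.inl ⟨hP, ?_⟩
    rintro ⟨z, hz, -⟩
    obtain ⟨w, hw⟩ := hP
    obtain ⟨N0, hN0⟩ := Filter.eventually_atTop.mp hw
    have hcne : (Finset.range (w.length + 1)).Nonempty := ⟨0, by simp⟩
    set c : ℝ := (Finset.range (w.length + 1)).inf' hcne
      (fun j => d (prefixWord z (j + 1))) with hcdef
    have hcpos : 0 < c := by
      rw [hcdef, Finset.lt_inf'_iff]
      intro j hj
      exact hd _ (prefixWord_ne_nil z (Nat.succ_pos j))
    obtain ⟨N1, hN1⟩ := Metric.tendsto_atTop.mp hz c hcpos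
    set n := max (max N0 N1) (w.length + 1) with hndef
    have h1 : treeDist d (v n) (prefixWord z n) < c := by
      have := hN1 n (le_trans (le_max_right N0 N1) (le_max_left _ _))
      rw [Real.dist_eq, sub_zero] at this
      exact lt_of_le_of_lt (le_abs_self _) this
    have hvn : v n = w := hN0 n (le_trans (le_max_left N0 N1) (le_max_left _ _))
    rw [hvn] at h1
    set j := (lcp w (prefixWord z n)).length with hjdef
    have hjw : j ≤ w.length := lcp_length_le_left _ _
    have hwn : w.length + 1 ≤ n := le_max_right _ _
    have hsingle : d ((prefixWord z n).take (j + 1)) ≤ dTail d (prefixWord z n) j :=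
      dTail_single d hd _ (by rw [prefixWord_length]; omega)
    rw [prefixWord_take z (by omega : j + 1 ≤ n)] at hsingle
    have hcle : c ≤ d (prefixWord z (j + 1)) := by
      rw [hcdef]
      exact Finset.inf'_le _ (Finset.mem_range.mpr (by omega))
    have heq := treeDist_eq d w (prefixWord z n)
    have hn1 := dTail_nonneg d hd w j
    rw [← hjdef] at heq
    linarith
  · -- right alternative
    -- lengths are unbounded
    have hfreq : ∀ m a : ℕ, ∃ n, a ≤ n ∧ m ≤ (v n).length := by
      by_contra hcon
      push_neg at hcon
      obtain ⟨m, a, ha⟩ := hcon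
      apply hP
      obtain ⟨δ, hδpos, hδle⟩ := CauchyAux.exists_delta d hd m
      obtain ⟨Nc, hNc⟩ := hv δ hδpos
      set b := max a Nc with hbdef
      refine ⟨v b, Filter.eventually_atTop.mpr ⟨b, ?_⟩⟩
      intro n hn
      by_contra hne
      set j := (lcp (v n) (v b)).length with hjdef
      have hlen_n : (v n).length < m := ha n (le_trans (le_max_left a Nc) hn)
      have hlen_b : (v b).length < m := ha b (le_max_left a Nc)
      have hj1 : j ≤ (v n).length := lcp_length_le_left _ _
      have hj2 : j ≤ (v b).length := lcp_length_le_right _ _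
      have hdist := hNc n (le_trans (le_max_right a Nc) hn) b (le_max_right a Nc)
      rw [treeDist_eq, ← hjdef] at hdist
      have hcase : j < (v n).length ∨ j < (v b).length := by
        by_contra hcc
        push_neg at hcc
        have e1 : j = (v n).length := le_antisymm hj1 hcc.1
        have e2 : j = (v b).length := le_antisymm hj2 hcc.2
        have h3 : (v n).take j = (v b).take j :=
          take_eq_of_le_lcp (u := v n) (w := v b) (le_of_eq hjdef.symm)
        have t1 : (v n).take j = v n := by rw [e1]; exact List.take_length
        have t2 : (v b).take j = v b := by rw [e2]; exact List.take_length
        exact hne (t1.symm.trans (h3.trans t2))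
      rcases hcase with h | h
      · have hs := dTail_single d hd (v n) h
        have hδ : δ ≤ d ((v n).take (j + 1)) := by
          apply hδle
          · rw [Ne, List.take_eq_nil_iff]
            rintro (h' | h')
            · omega
            · rw [h'] at h; simp at h
          · rw [List.length_take]; omega
        have hnn := dTail_nonneg d hd (v b) j
        linarith
      · have hs := dTail_single d hd (v b) h
        have hδ : δ ≤ d ((v b).take (j + 1)) := by
          apply hδle
          · rw [Ne, List.take_eq_nil_iff]
            rintro (h' | h')
            · omega
            · rw [h'] at h; simp at h
          · rw [List.length_take]; omega
        have hnn := dTail_nonneg d hd (v n) j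
        linarith
    -- prefix stabilization
    have hstab : ∀ m : ℕ, ∃ N : ℕ, ∀ n, N ≤ n → ∀ n', N ≤ n' →
        m ≤ (v n).length → m ≤ (v n').length → (v n).take m = (v n').take m := by
      intro m
      obtain ⟨δ, hδpos, hδle⟩ := CauchyAux.exists_delta d hd m
      obtain ⟨Nc, hNc⟩ := hv δ hδpos
      refine ⟨Nc, ?_⟩
      intro n hn n' hn' h1 h2
      by_contra hne
      set j := (lcp (v n) (v n')).length with hjdef
      have hj : j < m := by
        by_contra hc
        push_neg at hc
        exact hne (take_eq_of_le_lcp (u := v n) (w := v n')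
          (hjdef ▸ hc))
      have hjlen : j < (v n).length := lt_of_lt_of_le hj h1
      have hdist := hNc n hn n' hn'
      rw [treeDist_eq, ← hjdef] at hdist
      have hs := dTail_single d hd (v n) hjlen
      have hδ : δ ≤ d ((v n).take (j + 1)) := by
        apply hδle
        · rw [Ne, List.take_eq_nil_iff]
          rintro (h' | h')
          · omega
          · rw [h'] at hjlen; simp at hjlen
        · rw [List.length_take]; omega
      have hnn := dTail_nonneg d hd (v n') j
      linarith
    choose N hN using hstab
    set M : ℕ → ℕ := fun m => (Finset.range (m + 1)).sup N with hMdef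
    have hMle : ∀ t m : ℕ, t ≤ m → N t ≤ M m := by
      intro t m h
      exact Finset.le_sup (Finset.mem_range.mpr (by omega))
    choose K hK1 hK2 using hfreq
    set z : ℕ → Bool := fun i => (v (K (i + 1) (M (i + 1)))).getD i false with hzdef
    have hz : ∀ m n, M m ≤ n → m ≤ (v n).length → (v n).take m = prefixWord z m := by
      intro m n hn hlen
      apply List.ext_getElem
      · rw [List.length_take, prefixWord_length, min_eq_left hlen]
      · intro i h1 h2
        have him : i < m := by rwa [prefixWord_length] at h2
        set k := K (i + 1) (M (i + 1)) with hkdef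
        have hk1 : M (i + 1) ≤ k := hK1 _ _
        have hk2 : i + 1 ≤ (v k).length := hK2 _ _
        have heq : (v n).take (i + 1) = (v k).take (i + 1) :=
          hN (i + 1) n (le_trans (hMle _ _ (by omega)) hn)
            k (le_trans (hMle _ _ le_rfl) hk1)
            (by omega) hk2
        have hilen : i < (v n).length := by omega
        have hiklen : i < (v k).length := by omega
        have step1 : ((v n).take m)[i] = (v n)[i]'hilen := List.getElem_take
        have step2 : (v n)[i]'hilen = ((v n).take (i + 1))[i]'(by
            rw [List.length_take]; omega) := (List.getElem_take).symm
        have step3 : ((v n).take (i + 1))[i]'(by rw [List.length_take]; omega)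
            = ((v k).take (i + 1))[i]'(by rw [List.length_take]; omega) := by
          apply List.getElem_of_eq heq
        have step4 : ((v k).take (i + 1))[i]'(by rw [List.length_take]; omega)
            = (v k)[i]'hiklen := List.getElem_take
        have step5 : (prefixWord z m)[i] = z i := prefixWord_getElem z h2
        have step6 : z i = (v k)[i]'hiklen := by
          rw [hzdef]
          exact List.getD_eq_getElem _ _ hiklen
        rw [step1, step2, step3, step4, step5, step6]
    -- the tendsto property
    have hten : Filter.Tendsto (fun n => treeDist d (v n) (prefixWord z n))
        Filter.atTop (nhds 0) := by
      rw [Metric.tendsto_atTop]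
      intro ε hε
      obtain ⟨Nc, hNc⟩ := hv (ε / 4) (by linarith)
      refine ⟨max Nc (v Nc).length, ?_⟩
      intro n hn
      have hn1 : Nc ≤ n := le_trans (le_max_left _ _) hn
      have hn2 : (v Nc).length ≤ n := le_trans (le_max_right _ _) hn
      set j := (lcp (v n) (prefixWord z n)).length with hjdef
      have hju : j ≤ (v n).length := lcp_length_le_left _ _
      have hjn : j ≤ n := by
        have := lcp_length_le_right (v n) (prefixWord z n)
        rwa [prefixWord_length] at this
      set k := K n (max (M n) Nc) with hkdef
      have hk0 : max (M n) Nc ≤ k := hK1 _ _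
      have hkM : M n ≤ k := le_trans (le_max_left _ _) hk0
      have hkc : Nc ≤ k := le_trans (le_max_right _ _) hk0
      have hklen : n ≤ (v k).length := hK2 _ _
      have hkz : (v k).take n = prefixWord z n := hz n k hkM hklen
      have hdist_k : treeDist d (v n) (v k) < ε / 4 := hNc n hn1 k hkc
      have hdist_c : treeDist d (v n) (v Nc) < ε / 4 := hNc n hn1 Nc le_rfl
      rw [Real.dist_eq, sub_zero, abs_of_nonneg (treeDist_nonneg d hd _ _)]
      rw [treeDist_eq, ← hjdef]
      by_cases hcase : j = n
      · have h2 : dTail d (prefixWord z n) j = 0 :=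
          dTail_of_ge _ _ (by rw [prefixWord_length]; omega)
        have hlcpc : (lcp (v n) (v Nc)).length ≤ j := by
          have := lcp_length_le_right (v n) (v Nc)
          omega
        have h1 : dTail d (v n) j ≤ treeDist d (v n) (v Nc) := by
          rw [treeDist_eq]
          have ha1 := dTail_anti d hd (v n) hlcpc
          have ha2 := dTail_nonneg d hd (v Nc) (lcp (v n) (v Nc)).length
          linarith
        linarith
      · have hjn' : j < n := lt_of_le_of_ne hjn hcase
        have hkey : (lcp (v n) (v k)).length ≤ j := by
          by_cases hju' : j = (v n).length
          · have := lcp_length_le_left (v n) (v k)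
            omega
          · have hju2 : j < (v n).length := lt_of_le_of_ne hju hju'
            by_contra hc
            push_neg at hc
            have e1 : (v n).take (j + 1) = (v k).take (j + 1) :=
              take_eq_of_le_lcp hc
            have e2 : (v k).take (j + 1) = (prefixWord z n).take (j + 1) := by
              rw [← hkz, List.take_take, min_eq_left (by omega : j + 1 ≤ n)]
            have e3 := le_lcp_length (u := v n) (w := prefixWord z n)
              (e1.trans e2) (by omega)
            rw [← hjdef] at e3
            omega
        have h1 : dTail d (v n) j ≤ treeDist d (v n) (v k) := by
          rw [treeDist_eq]
          have ha1 := dTail_anti d hd (v n) hkey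
          have ha2 := dTail_nonneg d hd (v k) (lcp (v n) (v k)).length
          linarith
        have h2 : dTail d (prefixWord z n) j ≤ treeDist d (v n) (v k) := by
          have e : dTail d (prefixWord z n) j
              = ∑ i ∈ Finset.Ico j n, d ((v k).take (i + 1)) := by
            rw [dTail, prefixWord_length]
            apply Finset.sum_congr rfl
            intro i hi
            have hi' := (Finset.mem_Ico.mp hi).2
            rw [← hkz, List.take_take, min_eq_left (by omega : i + 1 ≤ n)]
          have e2 : ∑ i ∈ Finset.Ico j n, d ((v k).take (i + 1))
              ≤ dTail d (v k) j := by
            rw [dTail]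
            apply Finset.sum_le_sum_of_subset_of_nonneg
            · exact Finset.Ico_subset_Ico le_rfl hklen
            · intro i hi _
              exact (dTail_term_pos d hd (v k) (Finset.mem_Ico.mp hi).2).le
          rw [treeDist_eq]
          have h3 := dTail_anti d hd (v k) hkey
          have h4 := dTail_nonneg d hd (v n) (lcp (v n) (v k)).length
          linarith
        linarith
    refine Or.inr ⟨⟨z, hten, ?_⟩, hP⟩
    -- uniqueness
    intro z' hz'
    funext i
    by_contra hne
    have key : ∀ (y : ℕ → Bool) (c : ℝ) (n : ℕ), i < n →
        (∀ j, j ≤ i → c ≤ d (prefixWord y (j + 1))) →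
        treeDist d (v n) (prefixWord y n) < c →
        (v n).take (i + 1) = prefixWord y (i + 1) := by
      intro y c n hin hc hlt
      set jy := (lcp (v n) (prefixWord y n)).length with hjydef
      have hkey : i + 1 ≤ jy := by
        by_contra hcc
        push_neg at hcc
        have hjyn : jy < n := by omega
        have hs : d ((prefixWord y n).take (jy + 1)) ≤ dTail d (prefixWord y n) jy :=
          dTail_single d hd _ (by rw [prefixWord_length]; omega)
        rw [prefixWord_take y (by omega : jy + 1 ≤ n)] at hs
        have hinf : c ≤ d (prefixWord y (jy + 1)) := hc jy (by omega)
        have heq := treeDist_eq d (v n) (prefixWord y n)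
        rw [← hjydef] at heq
        have hnn := dTail_nonneg d hd (v n) jy
        linarith
      have := take_eq_of_le_lcp (u := v n) (w := prefixWord y n) (hjydef ▸ hkey)
      rwa [prefixWord_take y (by omega : i + 1 ≤ n)] at this
    have hcne : (Finset.range (i + 1)).Nonempty := ⟨0, by simp⟩
    set c : ℝ := (Finset.range (i + 1)).inf' hcne
      (fun j => d (prefixWord z (j + 1))) with hcdef
    set c' : ℝ := (Finset.range (i + 1)).inf' hcne
      (fun j => d (prefixWord z' (j + 1))) with hc'def
    have hcpos : 0 < c := by
      rw [hcdef, Finset.lt_inf'_iff]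
      intro j hj
      exact hd _ (prefixWord_ne_nil z (Nat.succ_pos j))
    have hc'pos : 0 < c' := by
      rw [hc'def, Finset.lt_inf'_iff]
      intro j hj
      exact hd _ (prefixWord_ne_nil z' (Nat.succ_pos j))
    obtain ⟨N1, h1⟩ := Metric.tendsto_atTop.mp hten c hcpos
    obtain ⟨N2, h2⟩ := Metric.tendsto_atTop.mp hz' c' hc'pos
    set n := max (max N1 N2) (i + 1) with hndef
    have hin : i < n := lt_of_lt_of_le (Nat.lt_succ_self i) (le_max_right _ _)
    have e1 : (v n).take (i + 1) = prefixWord z (i + 1) := by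
      apply key z c n hin
      · intro j hj
        rw [hcdef]
        exact Finset.inf'_le _ (Finset.mem_range.mpr (by omega))
      · have := h1 n (le_trans (le_max_left N1 N2) (le_max_left _ _))
        rw [Real.dist_eq, sub_zero] at this
        exact lt_of_le_of_lt (le_abs_self _) this
    have e2 : (v n).take (i + 1) = prefixWord z' (i + 1) := by
      apply key z' c' n hin
      · intro j hj
        rw [hc'def]
        exact Finset.inf'_le _ (Finset.mem_range.mpr (by omega))
      · have := h2 n (le_trans (le_max_right N1 N2) (le_max_left _ _))
        rw [Real.dist_eq, sub_zero] at this
        exact lt_of_le_of_lt (le_abs_self _) this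
    have e3 : prefixWord z' (i + 1) = prefixWord z (i + 1) := e2.symm.trans e1
    have e4 := congrArg (fun l => l.getD i false) e3
    rw [CauchyAux.prefixWord_getD z' (Nat.lt_succ_self i),
      CauchyAux.prefixWord_getD z (Nat.lt_succ_self i)] at e4
    exact hne e4
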